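/- The age of the countably infinite dimensional symplectic space (V, β) over GF(2) does not have the Ramsey property. Concretely: there exist finite-dimensional subspaces A ≤ B of V (one may take A = U and B = W) and a number of colors r (r = 3 suffices) such that for every finite-dimensional subspace C ≤ V there is a coloring ξ from the set of subspaces of C isometric to A into r colors with the property that for every subspace B' ≤ C isometric to B there exist subspaces A', A'' ≤ B', both isometric to A, with ξ(A') ≠ ξ(A''). -/

import Mathlib

open Module Submodule

/-- Two subspaces `X, Y` of `V` are isometric with respect to the bilinear form `β`:
there is a linear isomorphism `X ≃ Y` preserving `β`. -/
def IsIsometric {V : Type*} [AddCommGroup V] [Module (ZMod 2) V]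
    (β : V →ₗ[ZMod 2] V →ₗ[ZMod 2] ZMod 2) (X Y : Submodule (ZMod 2) V) : Prop :=
  ∃ f : X ≃ₗ[ZMod 2] Y, ∀ x y : X, β (x : V) (y : V) = β (f x : V) (f y : V)

namespace SympAux

/-- Gram matrix of a "U-frame": radical vector first, then two hyperbolic pairs. -/
def M5 : Fin 5 → Fin 5 → ZMod 2 :=
  ![![0,0,0,0,0],![0,0,1,0,0],![0,1,0,0,0],![0,0,0,0,1],![0,0,0,1,0]]

/-- Gram matrix of three orthogonal hyperbolic pairs. -/
def G6 : Fin 6 → Fin 6 → ZMod 2 :=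
  ![![0,1,0,0,0,0],![1,0,0,0,0,0],![0,0,0,1,0,0],![0,0,1,0,0,0],![0,0,0,0,0,1],![0,0,0,0,1,0]]

variable {V : Type*} [AddCommGroup V] [Module (ZMod 2) V]
  (β : V →ₗ[ZMod 2] V →ₗ[ZMod 2] ZMod 2)

def IsFrame (v : Fin 5 → V) : Prop :=
  LinearIndependent (ZMod 2) v ∧ ∀ i j, β (v i) (v j) = M5 i j

def frameOf (u : Fin 6 → V) (C : Fin 5 → Fin 6 → ZMod 2) : Fin 5 → V :=
  fun i => ∑ j, C i j • u j

lemma beta_frameOf {u : Fin 6 → V} (hu : ∀ i j, β (u i) (u j) = G6 i j)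
    (C D : Fin 5 → Fin 6 → ZMod 2) (i j : Fin 5) :
    β (frameOf u C i) (frameOf u D j) = ∑ a, ∑ b, C i a * D j b * G6 a b := by
  simp only [frameOf, map_sum, map_smul, LinearMap.sum_apply, LinearMap.smul_apply,
    smul_eq_mul, hu]
  simp only [Finset.mul_sum]
  rw [Finset.sum_comm]
  exact Finset.sum_congr rfl fun a _ => Finset.sum_congr rfl fun b _ => by ring

lemma frameOf_li {u : Fin 6 → V} (hu : LinearIndependent (ZMod 2) u)
    {C : Fin 5 → Fin 6 → ZMod 2} (hC : LinearIndependent (ZMod 2) C) :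
    LinearIndependent (ZMod 2) (frameOf u C) := by
  let T : (Fin 6 → ZMod 2) →ₗ[ZMod 2] V := Fintype.linearCombination (ZMod 2) u
  have hT : LinearMap.ker T = ⊥ := by
    rw [LinearMap.ker_eq_bot']
    intro g hg
    have := Fintype.linearIndependent_iff.mp hu g (by simpa [T, Fintype.linearCombination_apply] using hg)
    funext i; exact this i
  have : frameOf u C = T ∘ C := by
    funext i; simp [frameOf, T, Fintype.linearCombination_apply]
  rw [this]
  exact hC.map' T hT

lemma isom_of_frames {v w : Fin 5 → V} (hv : IsFrame β v) (hw : IsFrame β w) :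
    ∃ f : span (ZMod 2) (Set.range v) ≃ₗ[ZMod 2] span (ZMod 2) (Set.range w),
      ∀ x y : span (ZMod 2) (Set.range v),
        β (x : V) (y : V) = β (f x : V) (f y : V) := by
  classical
  let bv := Basis.span hv.1
  let bw := Basis.span hw.1
  let f := bv.equiv bw (Equiv.refl _)
  refine ⟨f, ?_⟩
  let Sv := span (ZMod 2) (Set.range v)
  let Sw := span (ZMod 2) (Set.range w)
  have key : β.compl₁₂ Sv.subtype Sv.subtype
      = β.compl₁₂ (Sw.subtype ∘ₗ f.toLinearMap) (Sw.subtype ∘ₗ f.toLinearMap) := by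
    apply bv.ext; intro i
    apply bv.ext; intro j
    have hf : ∀ i, f (bv i) = bw i := fun i => bv.equiv_apply i bw (Equiv.refl _)
    simp only [LinearMap.compl₁₂_apply, LinearMap.coe_comp, Function.comp_apply,
      LinearEquiv.coe_coe, hf, subtype_apply]
    simp only [Basis.span_apply, bv, bw]
    rw [hv.2, hw.2]
  intro x y
  simpa using congrArg (fun g => g y) (congrArg (fun g => g x) key)

lemma frame_rad0 {v : Fin 5 → V} (hv : IsFrame β v) :
    ∀ y ∈ span (ZMod 2) (Set.range v), β (v 0) y = 0 := by
  intro y hy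
  obtain ⟨c, rfl⟩ := (mem_span_range_iff_exists_fun _).mp hy
  simp [map_sum, map_smul, hv.2, Fin.sum_univ_five, M5]

lemma frame_rad {v : Fin 5 → V} (hv : IsFrame β v) {x : V}
    (hx : x ∈ span (ZMod 2) (Set.range v))
    (hrad : ∀ y ∈ span (ZMod 2) (Set.range v), β x y = 0) :
    x = 0 ∨ x = v 0 := by
  obtain ⟨c, rfl⟩ := (mem_span_range_iff_exists_fun _).mp hx
  have h : ∀ j, β (∑ i, c i • v i) (v j) = 0 :=
    fun j => hrad _ (subset_span ⟨j, rfl⟩)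
  have e : ∀ j : Fin 5, ∑ i, c i * M5 i j = 0 := by
    intro j
    rw [← h j]
    simp [map_sum, map_smul, LinearMap.sum_apply, LinearMap.smul_apply, hv.2]
  have e1 := e 2
  have e2 := e 1
  have e3 := e 4
  have e4 := e 3
  simp [Fin.sum_univ_five, M5, Matrix.vecHead, Matrix.vecTail] at e1 e2 e3 e4
  rw [Fin.sum_univ_five, e1, e2, e3, e4]
  simp only [zero_smul, add_zero]
  rcases (by decide : ∀ z : ZMod 2, z = 0 ∨ z = 1) (c 0) with h0 | h0 <;>
    rw [h0] <;> simp

end SympAux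

namespace SympAux

/-- the six coefficient matrices of our copies of `U` inside `W`,
rows w.r.t. the 6-tuple `(e₀, f₀, e₁, f₁, e₂, f₂)`; first row is the radical. -/
protected def CC : Fin 6 → Fin 5 → Fin 6 → ZMod 2 :=
  ![![![1,0,0,0,0,0],![0,0,1,0,0,0],![0,0,0,1,0,0],![0,0,0,0,1,0],![0,0,0,0,0,1]],
    ![![0,1,0,0,0,0],![0,0,1,0,0,0],![0,0,0,1,0,0],![0,0,0,0,1,0],![0,0,0,0,0,1]],
    ![![1,1,0,0,0,0],![0,0,1,0,0,0],![0,0,0,1,0,0],![0,0,0,0,1,0],![0,0,0,0,0,1]],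
    ![![0,0,1,0,0,0],![1,0,0,0,0,0],![0,1,0,0,0,0],![0,0,0,0,1,0],![0,0,0,0,0,1]],
    ![![0,0,0,0,1,0],![1,0,0,0,0,0],![0,1,0,0,0,0],![0,0,1,0,0,0],![0,0,0,1,0,0]],
    ![![0,0,1,0,1,0],![1,0,0,0,0,0],![0,1,0,0,0,0],![0,0,1,0,0,0],![0,0,0,1,0,1]]]

theorem CC_gram : ∀ k : Fin 6, ∀ i j : Fin 5,
    (∑ a, ∑ b, SympAux.CC k i a * SympAux.CC k j b * G6 a b) = M5 i j := by decide
theorem CC_li0 : ∀ k : Fin 6, ∀ g : Fin 5 → ZMod 2,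
    ∑ i, g i • SympAux.CC k i = 0 → ∀ i, g i = 0 := by decide
theorem CC_rel1 : ∀ j, SympAux.CC 2 0 j = SympAux.CC 0 0 j + SympAux.CC 1 0 j := by decide
theorem CC_rel2 : ∀ j, SympAux.CC 5 0 j = SympAux.CC 3 0 j + SympAux.CC 4 0 j := by decide
theorem CC_b1 : (∑ a, ∑ b, SympAux.CC 0 0 a * SympAux.CC 1 0 b * G6 a b) = 1 := by decide
theorem CC_b2 : (∑ a, ∑ b, SympAux.CC 3 0 a * SympAux.CC 4 0 b * G6 a b) = 0 := by decide

theorem CC_li (k : Fin 6) : LinearIndependent (ZMod 2) (SympAux.CC k) :=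
  Fintype.linearIndependent_iff.mpr (CC_li0 k)

theorem frame_of_symp {V : Type*} [AddCommGroup V] [Module (ZMod 2) V]
    (β : V →ₗ[ZMod 2] V →ₗ[ZMod 2] ZMod 2) {u : Fin 6 → V}
    (hu1 : LinearIndependent (ZMod 2) u) (hu2 : ∀ i j, β (u i) (u j) = G6 i j)
    (k : Fin 6) : IsFrame β (frameOf u (SympAux.CC k)) :=
  ⟨frameOf_li hu1 (CC_li k), fun i j => by rw [beta_frameOf β hu2, CC_gram]⟩

end SympAux

/-- The age of the countably infinite dimensional symplectic space `(V, β)` over `GF(2)`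
does not have the Ramsey property: there are finite-dimensional subspaces `A ≤ B` and a
number of colors `r` such that for every finite-dimensional `C ≤ V` some `r`-coloring of
the copies of `A` in `C` is non-monochromatic on every copy of `B` inside `C`.
Here `V` has a basis `{e_i, e_i*}` (encoded as `b (i, false)` and `b (i, true)`) of
pairwise orthogonal hyperbolic pairs for the alternating form `β`. -/
theorem symplectic_age_not_ramsey
    (V : Type*) [AddCommGroup V] [Module (ZMod 2) V]
    (β : V →ₗ[ZMod 2] V →ₗ[ZMod 2] ZMod 2)
    (b : Basis (ℕ × Bool) (ZMod 2) V)
    (halt : ∀ v : V, β v v = 0)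
    (hef : ∀ i j : ℕ, β (b (i, false)) (b (j, true)) = if i = j then 1 else 0)
    (hee : ∀ i j : ℕ, β (b (i, false)) (b (j, false)) = 0)
    (hff : ∀ i j : ℕ, β (b (i, true)) (b (j, true)) = 0) :
    ∃ A B : Submodule (ZMod 2) V, A ≤ B ∧
      FiniteDimensional (ZMod 2) A ∧ FiniteDimensional (ZMod 2) B ∧
      ∃ r : ℕ,
        ∀ C : Submodule (ZMod 2) V, FiniteDimensional (ZMod 2) C →
          ∃ ξ : Submodule (ZMod 2) V → Fin r,
            ∀ B' : Submodule (ZMod 2) V, B' ≤ C → IsIsometric β B' B →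
              ∃ A' A'' : Submodule (ZMod 2) V,
                A' ≤ B' ∧ A'' ≤ B' ∧ IsIsometric β A' A ∧ IsIsometric β A'' A ∧
                ξ A' ≠ ξ A'' := by
  classical
  have hsymm : ∀ x y : V, β x y = β y x := by
    intro x y
    have h := halt (x + y)
    simp only [map_add, LinearMap.add_apply, halt, zero_add, add_zero] at h
    have h2 : β x y + β y x = 0 := by linear_combination h
    rw [add_eq_zero_iff_eq_neg, CharTwo.neg_eq] at h2
    exact h2
  have hfe : ∀ i j : ℕ, β (b (i, true)) (b (j, false)) = if i = j then 1 else 0 := by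
    intro i j
    rw [hsymm, hef]
    simp [eq_comm]
  have hgen : ∀ p p' : ℕ × Bool,
      β (b p) (b p') = if p.1 = p'.1 ∧ p.2 ≠ p'.2 then 1 else 0 := by
    rintro ⟨i, s⟩ ⟨j, t⟩
    cases s <;> cases t <;> simp [hef, hee, hff, hfe]
  -- the symplectic 6-tuple spanning B
  let u : Fin 6 → V :=
    ![b (0, false), b (0, true), b (1, false), b (1, true), b (2, false), b (2, true)]
  have hu_eq : u = b ∘ ![(0, false), (0, true), (1, false), (1, true), (2, false), (2, true)] := by
    funext i; fin_cases i <;> rfl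
  have hu_li : LinearIndependent (ZMod 2) u := by
    rw [hu_eq]
    exact b.linearIndependent.comp _ (by decide)
  have hu_gram : ∀ i j, β (u i) (u j) = SympAux.G6 i j := by
    have hd : ∀ i j : Fin 6,
        ((if (![(0, false), (0, true), (1, false), (1, true), (2, false), (2, true)] i).1
              = (![(0, false), (0, true), (1, false), (1, true), (2, false), (2, true)] j).1
            ∧ (![(0, false), (0, true), (1, false), (1, true), (2, false), (2, true)] i).2
              ≠ (![(0, false), (0, true), (1, false), (1, true), (2, false), (2, true)] j).2
          then (1 : ZMod 2) else 0) = SympAux.G6 i j) := by decide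
    intro i j
    rw [hu_eq]
    exact (hgen _ _).trans (hd i j)
  -- the quadratic refinement q of β
  let cfun : ℕ × Bool → ℕ × Bool → ZMod 2 := fun p p' =>
    if p.1 = p'.1 ∧ p.2 = false ∧ p'.2 = true then 1 else 0
  let B0 : V →ₗ[ZMod 2] V →ₗ[ZMod 2] ZMod 2 :=
    b.constr (ZMod 2) fun p => b.constr (ZMod 2) fun p' => cfun p p'
  have hB0b : ∀ p p', B0 (b p) (b p') = cfun p p' := by
    intro p p'
    simp only [B0, Basis.constr_basis]
  have hpolar : ∀ x y : V, β x y = B0 x y + B0 y x := by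
    have key : β = B0 + B0.flip := by
      apply b.ext; intro p
      apply b.ext; intro p'
      rcases p with ⟨i, bi⟩; rcases p' with ⟨j, bj⟩
      simp only [LinearMap.add_apply, LinearMap.flip_apply, hB0b]
      rw [hgen]
      by_cases h : i = j
      · subst h; cases bi <;> cases bj <;> simp [cfun]
      · cases bi <;> cases bj <;> simp [cfun, h, Ne.symm h]
    intro x y
    rw [key]
    rfl
  let q : V → ZMod 2 := fun x => B0 x x
  have hq : ∀ x y : V, q (x + y) = q x + q y + β x y := by
    intro x y
    show B0 (x + y) (x + y) = B0 x x + B0 y y + β x y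
    rw [hpolar x y]
    simp only [map_add, LinearMap.add_apply]
    ring
  -- the coloring
  let ξ : Submodule (ZMod 2) V → Fin 2 := fun X =>
    if (∃ x, x ∈ X ∧ x ≠ 0 ∧ (∀ y ∈ X, β x y = 0) ∧ q x = 1) then 1 else 0
  -- frame of A inside B
  have hAframe : SympAux.IsFrame β (SympAux.frameOf u (SympAux.CC 0)) :=
    SympAux.frame_of_symp β hu_li hu_gram 0
  refine ⟨span (ZMod 2) (Set.range (SympAux.frameOf u (SympAux.CC 0))),
    span (ZMod 2) (Set.range u), ?_, ?_, ?_, 2, fun C _ => ⟨ξ, ?_⟩⟩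
  · refine span_le.mpr ?_
    rintro x ⟨i, rfl⟩
    exact sum_mem fun j _ => smul_mem _ _ (subset_span ⟨j, rfl⟩)
  · exact FiniteDimensional.span_of_finite _ (Set.finite_range _)
  · exact FiniteDimensional.span_of_finite _ (Set.finite_range _)
  rintro B' hB'C ⟨f, hf⟩
  let uB : Fin 6 → (span (ZMod 2) (Set.range u)) := fun j => ⟨u j, subset_span ⟨j, rfl⟩⟩
  let g := f.symm
  let u' : Fin 6 → V := fun j => ((g (uB j) : B') : V)
  have hu'mem : ∀ j, u' j ∈ B' := fun j => SetLike.coe_mem _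
  have hu'gram : ∀ i j, β (u' i) (u' j) = SympAux.G6 i j := by
    intro i j
    have h1 := hf (g (uB i)) (g (uB j))
    rw [show f (g (uB i)) = uB i from f.apply_symm_apply _,
      show f (g (uB j)) = uB j from f.apply_symm_apply _] at h1
    exact h1.trans (hu_gram i j)
  have huB_li : LinearIndependent (ZMod 2) uB := by
    apply LinearIndependent.of_comp (span (ZMod 2) (Set.range u)).subtype
    exact hu_li
  let T : (span (ZMod 2) (Set.range u)) →ₗ[ZMod 2] V := B'.subtype.comp g.toLinearMap
  have hT : LinearMap.ker T = ⊥ := by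
    rw [LinearMap.ker_eq_bot]
    exact Subtype.val_injective.comp g.injective
  have hu'_li : LinearIndependent (ZMod 2) u' := huB_li.map' T hT
  have hframe : ∀ k, SympAux.IsFrame β (SympAux.frameOf u' (SympAux.CC k)) :=
    SympAux.frame_of_symp β hu'_li hu'gram
  have hframe_mem : ∀ k i, SympAux.frameOf u' (SympAux.CC k) i ∈ B' :=
    fun k i => sum_mem fun j _ => smul_mem _ _ (hu'mem j)
  let s : Fin 6 → ZMod 2 := fun k => q (SympAux.frameOf u' (SympAux.CC k) 0)
  have hrel : ∀ (k l m : Fin 6), (∀ j, SympAux.CC m 0 j = SympAux.CC k 0 j + SympAux.CC l 0 j) →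
      SympAux.frameOf u' (SympAux.CC m) 0
        = SympAux.frameOf u' (SympAux.CC k) 0 + SympAux.frameOf u' (SympAux.CC l) 0 := by
    intro k l m h
    simp only [SympAux.frameOf, ← Finset.sum_add_distrib]
    exact Finset.sum_congr rfl fun j _ => by rw [h j, add_smul]
  have h3 : s 2 = s 0 + s 1 + 1 := by
    show q _ = _
    rw [hrel 0 1 2 SympAux.CC_rel1, hq, SympAux.beta_frameOf β hu'gram, SympAux.CC_b1]
  have h6 : s 5 = s 3 + s 4 + 0 := by
    show q _ = _
    rw [hrel 3 4 5 SympAux.CC_rel2, hq, SympAux.beta_frameOf β hu'gram, SympAux.CC_b2]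
  have hz : ∀ z : ZMod 2, z = 0 ∨ z = 1 := by decide
  obtain ⟨k, l, hk, hl⟩ : ∃ k l : Fin 6, s k = 1 ∧ s l = 0 := by
    rcases hz (s 0) with h0 | h0
    · rcases hz (s 1) with h1 | h1
      · exact ⟨2, 0, by rw [h3, h0, h1]; decide, h0⟩
      · exact ⟨1, 0, h1, h0⟩
    · rcases hz (s 3) with h4 | h4
      · exact ⟨0, 3, h0, h4⟩
      · rcases hz (s 4) with h5 | h5
        · exact ⟨0, 4, h0, h5⟩
        · exact ⟨0, 5, h0, by rw [h6, h4, h5]; decide⟩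
  refine ⟨span (ZMod 2) (Set.range (SympAux.frameOf u' (SympAux.CC k))),
    span (ZMod 2) (Set.range (SympAux.frameOf u' (SympAux.CC l))),
    span_le.mpr ?_, span_le.mpr ?_, ?_, ?_, ?_⟩
  · rintro x ⟨i, rfl⟩; exact hframe_mem k i
  · rintro x ⟨i, rfl⟩; exact hframe_mem l i
  · exact SympAux.isom_of_frames β (hframe k) hAframe
  · exact SympAux.isom_of_frames β (hframe l) hAframe
  · have h1 : ξ (span (ZMod 2) (Set.range (SympAux.frameOf u' (SympAux.CC k)))) = 1 := by
      show (if _ then _ else _) = _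
      rw [if_pos ⟨SympAux.frameOf u' (SympAux.CC k) 0, subset_span ⟨0, rfl⟩,
        (hframe k).1.ne_zero 0, SympAux.frame_rad0 β (hframe k), hk⟩]
    have h2 : ξ (span (ZMod 2) (Set.range (SympAux.frameOf u' (SympAux.CC l)))) = 0 := by
      show (if _ then _ else _) = _
      rw [if_neg]
      rintro ⟨x, hxm, hx0, hxr, hxq⟩
      rcases SympAux.frame_rad β (hframe l) hxm hxr with rfl | rfl
      · exact hx0 rfl
      · exact one_ne_zero (hxq.symm.trans hl)
    rw [h1, h2]
    decide
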